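/- Any two Λ-interleavings of the same pair M, N of representations (viewed as representations of Σ_Λ P) are ΛΛ‾-interleaved, where ΛΛ‾ is the untwisted translation of Σ_Λ P induced by Λ∘Λ. -/

import Mathlib

open CategoryTheory

/-- A translation of a proset `P`, bundled. -/
structure Translation (P : Type) [Preorder P] where
  toFun : P → P
  mono : Monotone toFun
  le_self : ∀ x, x ≤ toFun x

variable {P : Type} [Preorder P]

/-- The shoelace `Σ_Λ P`: two copies of `P`. -/
def Shoe (T : Translation P) : Type := P ⊕ P

/-- The left copy of `P` inside `Σ_Λ P`. -/
def Shoe.l {T : Translation P} (i : P) : Shoe T := Sum.inl i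

/-- The right copy of `P` inside `Σ_Λ P` (the "primed" copy). -/
def Shoe.r {T : Translation P} (i : P) : Shoe T := Sum.inr i

/-- The shoelace preorder. -/
instance {T : Translation P} : Preorder (Shoe T) where
  le x y := match x, y with
    | Sum.inl i, Sum.inl j => i ≤ j
    | Sum.inr i, Sum.inr j => i ≤ j
    | Sum.inl i, Sum.inr j => T.toFun i ≤ j
    | Sum.inr i, Sum.inl j => T.toFun i ≤ j
  le_refl x := by cases x <;> exact le_refl _
  le_trans x y z h1 h2 := by
    rcases x with i | i <;> rcases y with j | j <;> rcases z with k | k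
    · exact le_trans h1 h2
    · exact le_trans (T.mono h1) h2
    · exact le_trans (T.le_self i) (le_trans h1 (le_trans (T.le_self j) h2))
    · exact le_trans h1 h2
    · exact le_trans h1 h2
    · exact le_trans (T.le_self i) (le_trans h1 (le_trans (T.le_self j) h2))
    · exact le_trans (T.mono h1) h2
    · exact le_trans h1 h2

lemma Shoe.l_le_l {T : Translation P} {i j : P} (h : i ≤ j) :
    (Shoe.l i : Shoe T) ≤ Shoe.l j := h

lemma Shoe.r_le_r {T : Translation P} {i j : P} (h : i ≤ j) :
    (Shoe.r i : Shoe T) ≤ Shoe.r j := h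

lemma Shoe.l_le_r {T : Translation P} {i j : P} (h : T.toFun i ≤ j) :
    (Shoe.l i : Shoe T) ≤ Shoe.r j := h

lemma Shoe.r_le_l {T : Translation P} {i j : P} (h : T.toFun i ≤ j) :
    (Shoe.r i : Shoe T) ≤ Shoe.l j := h

variable {D : Type*} [Category D]

/-- A `Λ`-interleaving between representations `M, N : Q ⥤ D` of a proset `Q`,
given componentwise. -/
def IsInterleaving {Q : Type*} [Preorder Q] (Λ : Q → Q)
    (hmono : Monotone Λ) (hle : ∀ x, x ≤ Λ x) (M N : Q ⥤ D)
    (φ : ∀ x, M.obj x ⟶ N.obj (Λ x)) (ψ : ∀ x, N.obj x ⟶ M.obj (Λ x)) : Prop :=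
  (∀ x y (h : x ≤ y), M.map (homOfLE h) ≫ φ y = φ x ≫ N.map (homOfLE (hmono h))) ∧
  (∀ x y (h : x ≤ y), N.map (homOfLE h) ≫ ψ y = ψ x ≫ M.map (homOfLE (hmono h))) ∧
  (∀ x, φ x ≫ ψ (Λ x) = M.map (homOfLE ((hle x).trans (hle (Λ x))))) ∧
  (∀ x, ψ x ≫ φ (Λ x) = N.map (homOfLE ((hle x).trans (hle (Λ x)))))

section interRep

variable (T : Translation P) (M N : P ⥤ D)
  (φ : ∀ x, M.obj x ⟶ N.obj (T.toFun x)) (ψ : ∀ x, N.obj x ⟶ M.obj (T.toFun x))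

/-- Auxiliary map data for the shoelace representation of an interleaving. -/
def interMapAux : ∀ (x y : Shoe T), x ≤ y →
    (Sum.elim M.obj N.obj x ⟶ Sum.elim M.obj N.obj y)
  | Sum.inl _, Sum.inl _, h => M.map (homOfLE h)
  | Sum.inr _, Sum.inr _, h => N.map (homOfLE h)
  | Sum.inl i, Sum.inr _, h => φ i ≫ N.map (homOfLE h)
  | Sum.inr i, Sum.inl _, h => ψ i ≫ M.map (homOfLE h)

lemma interMapAux_comp (hint : IsInterleaving T.toFun T.mono T.le_self M N φ ψ)
    (x y z : Shoe T) (h1 : x ≤ y) (h2 : y ≤ z) :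
    interMapAux T M N φ ψ x z (le_trans h1 h2) =
      interMapAux T M N φ ψ x y h1 ≫ interMapAux T M N φ ψ y z h2 := by
  obtain ⟨natφ, natψ, intφψ, intψφ⟩ := hint
  rcases x with i | i <;> rcases y with j | j <;> rcases z with k | k
  · have a : i ≤ j := h1
    have b : j ≤ k := h2
    exact (show M.map (homOfLE (a.trans b)) = M.map (homOfLE a) ≫ M.map (homOfLE b) by
      rw [← M.map_comp, homOfLE_comp])
  · have a : i ≤ j := h1
    have b : T.toFun j ≤ k := h2
    exact (show φ i ≫ N.map (homOfLE ((T.mono a).trans b)) =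
        M.map (homOfLE a) ≫ (φ j ≫ N.map (homOfLE b)) by
      rw [reassoc_of% (natφ i j a)]
      simp only [← Functor.map_comp, homOfLE_comp])
  · have a : T.toFun i ≤ j := h1
    have b : T.toFun j ≤ k := h2
    exact (show M.map (homOfLE ((T.le_self i).trans (a.trans ((T.le_self j).trans b)))) =
        (φ i ≫ N.map (homOfLE a)) ≫ (ψ j ≫ M.map (homOfLE b)) by
      simp only [Category.assoc]
      rw [reassoc_of% (natψ (T.toFun i) j a), reassoc_of% (intφψ i)]
      simp only [← Functor.map_comp, homOfLE_comp])
  · have a : T.toFun i ≤ j := h1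
    have b : j ≤ k := h2
    exact (show φ i ≫ N.map (homOfLE (a.trans b)) =
        (φ i ≫ N.map (homOfLE a)) ≫ N.map (homOfLE b) by
      simp only [Category.assoc, ← Functor.map_comp, homOfLE_comp])
  · have a : T.toFun i ≤ j := h1
    have b : j ≤ k := h2
    exact (show ψ i ≫ M.map (homOfLE (a.trans b)) =
        (ψ i ≫ M.map (homOfLE a)) ≫ M.map (homOfLE b) by
      simp only [Category.assoc, ← Functor.map_comp, homOfLE_comp])
  · have a : T.toFun i ≤ j := h1
    have b : T.toFun j ≤ k := h2
    exact (show N.map (homOfLE ((T.le_self i).trans (a.trans ((T.le_self j).trans b)))) =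
        (ψ i ≫ M.map (homOfLE a)) ≫ (φ j ≫ N.map (homOfLE b)) by
      simp only [Category.assoc]
      rw [reassoc_of% (natφ (T.toFun i) j a), reassoc_of% (intψφ i)]
      simp only [← Functor.map_comp, homOfLE_comp])
  · have a : i ≤ j := h1
    have b : T.toFun j ≤ k := h2
    exact (show ψ i ≫ M.map (homOfLE ((T.mono a).trans b)) =
        N.map (homOfLE a) ≫ (ψ j ≫ M.map (homOfLE b)) by
      rw [reassoc_of% (natψ i j a)]
      simp only [← Functor.map_comp, homOfLE_comp])
  · have a : i ≤ j := h1
    have b : j ≤ k := h2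
    exact (show N.map (homOfLE (a.trans b)) = N.map (homOfLE a) ≫ N.map (homOfLE b) by
      rw [← N.map_comp, homOfLE_comp])

/-- The shoelace representation `V : Σ_Λ P ⥤ D` associated to a `Λ`-interleaving
`(M, N, φ, ψ)`: it is `M` on the left copy, `N` on the right copy, and uses `φ`, `ψ`
to jump across. -/
def interRep (hint : IsInterleaving T.toFun T.mono T.le_self M N φ ψ) :
    Shoe T ⥤ D where
  obj := Sum.elim M.obj N.obj
  map {x y} f := interMapAux T M N φ ψ x y (leOfHom f)
  map_id x := by
    cases x with
    | inl i => exact M.map_id i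
    | inr i => exact N.map_id i
  map_comp {x y z} f g :=
    interMapAux_comp T M N φ ψ hint x y z (leOfHom f) (leOfHom g)

end interRep

/-- The untwisted translation `(ΛΛ)‾` of `Σ_Λ P` induced by `Λ ∘ Λ`:
`i ↦ Λ(Λ(i))` and `i' ↦ (Λ(Λ(i)))'`. -/
def Translation.barSq (T : Translation P) : Translation (Shoe T) where
  toFun x := match x with
    | Sum.inl i => Shoe.l (T.toFun (T.toFun i))
    | Sum.inr i => Shoe.r (T.toFun (T.toFun i))
  mono := by
    rintro (i | i) (j | j) h
    · exact T.mono (T.mono h)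
    · exact T.mono (T.mono h)
    · exact T.mono (T.mono h)
    · exact T.mono (T.mono h)
  le_self := by
    rintro (i | i)
    · exact (T.le_self i).trans (T.le_self (T.toFun i))
    · exact (T.le_self i).trans (T.le_self (T.toFun i))

lemma interRep_map (T : Translation P) (M N : P ⥤ D)
    (φ : ∀ x, M.obj x ⟶ N.obj (T.toFun x)) (ψ : ∀ x, N.obj x ⟶ M.obj (T.toFun x))
    (hint : IsInterleaving T.toFun T.mono T.le_self M N φ ψ)
    {x y : Shoe T} (hle : x ≤ y) :
    (interRep T M N φ ψ hint).map (homOfLE hle) = interMapAux T M N φ ψ x y hle := rfl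

/-- The crossing map used to compare two interleavings. -/
def PhiAux (T : Translation P) (M N : P ⥤ D)
    (φ : ∀ x, M.obj x ⟶ N.obj (T.toFun x)) (ψ' : ∀ x, N.obj x ⟶ M.obj (T.toFun x)) :
    ∀ x : Shoe T,
      Sum.elim M.obj N.obj x ⟶ Sum.elim M.obj N.obj ((Translation.barSq T).toFun x)
  | Sum.inl i => φ i ≫ ψ' (T.toFun i)
  | Sum.inr i => N.map (homOfLE ((T.le_self i).trans (T.le_self _)))

/-- Any two `Λ`-interleavings of the same pair `M, N`, viewed as
representations of `Σ_Λ P`, are `(ΛΛ)‾`-interleaved, where `(ΛΛ)‾` is the untwisted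
translation of `Σ_Λ P` induced by `Λ ∘ Λ`. -/
theorem interleavings_are_bar_interleaved (T : Translation P) (M N : P ⥤ D)
    (φ : ∀ x, M.obj x ⟶ N.obj (T.toFun x)) (ψ : ∀ x, N.obj x ⟶ M.obj (T.toFun x))
    (φ' : ∀ x, M.obj x ⟶ N.obj (T.toFun x)) (ψ' : ∀ x, N.obj x ⟶ M.obj (T.toFun x))
    (h : IsInterleaving T.toFun T.mono T.le_self M N φ ψ)
    (h' : IsInterleaving T.toFun T.mono T.le_self M N φ' ψ') :
    ∃ (Φ : ∀ x : Shoe T, (interRep T M N φ ψ h).obj x ⟶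
        (interRep T M N φ' ψ' h').obj ((Translation.barSq T).toFun x))
      (Ψ : ∀ x : Shoe T, (interRep T M N φ' ψ' h').obj x ⟶
        (interRep T M N φ ψ h).obj ((Translation.barSq T).toFun x)),
      IsInterleaving (Translation.barSq T).toFun (Translation.barSq T).mono
        (Translation.barSq T).le_self
        (interRep T M N φ ψ h) (interRep T M N φ' ψ' h') Φ Ψ := by
  obtain ⟨natφ, natψ, tφψ, tψφ⟩ := id h
  obtain ⟨natφ', natψ', tφψ', tψφ'⟩ := id h'
  refine ⟨PhiAux T M N φ ψ', PhiAux T M N φ' ψ, ?_, ?_, ?_, ?_⟩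
  · rintro (i | i) (j | j) hle
    · show M.map (homOfLE (_ : i ≤ j)) ≫ (φ j ≫ ψ' (T.toFun j)) = (φ i ≫ ψ' (T.toFun i)) ≫ M.map (homOfLE (_ : T.toFun (T.toFun i) ≤ T.toFun (T.toFun j)))
      simp only [Category.assoc]
      rw [reassoc_of% natφ i j hle, natψ' _ _ (T.mono hle)]
    · show (φ i ≫ N.map (homOfLE (_ : T.toFun i ≤ j))) ≫ N.map (homOfLE (_ : j ≤ T.toFun (T.toFun j))) = (φ i ≫ ψ' (T.toFun i)) ≫ (φ' (T.toFun (T.toFun i)) ≫ N.map (homOfLE (_ : T.toFun (T.toFun (T.toFun i)) ≤ T.toFun (T.toFun j))))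
      simp only [Category.assoc]
      rw [reassoc_of% tψφ' (T.toFun i)]
      simp only [← Functor.map_comp, homOfLE_comp] <;> rfl
    · show (ψ i ≫ M.map (homOfLE (_ : T.toFun i ≤ j))) ≫ (φ j ≫ ψ' (T.toFun j)) = N.map (homOfLE (_ : i ≤ T.toFun (T.toFun i))) ≫ (ψ' (T.toFun (T.toFun i)) ≫ M.map (homOfLE (_ : T.toFun (T.toFun (T.toFun i)) ≤ T.toFun (T.toFun j))))
      simp only [Category.assoc]
      rw [reassoc_of% natφ _ _ hle, reassoc_of% tψφ i, natψ' _ _ (T.mono hle)] <;> rfl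
    · show N.map (homOfLE (_ : i ≤ j)) ≫ N.map (homOfLE (_ : j ≤ T.toFun (T.toFun j))) = N.map (homOfLE (_ : i ≤ T.toFun (T.toFun i))) ≫ N.map (homOfLE (_ : T.toFun (T.toFun i) ≤ T.toFun (T.toFun j)))
      simp only [← Functor.map_comp, homOfLE_comp] <;> rfl
  · rintro (i | i) (j | j) hle
    · show M.map (homOfLE (_ : i ≤ j)) ≫ (φ' j ≫ ψ (T.toFun j)) = (φ' i ≫ ψ (T.toFun i)) ≫ M.map (homOfLE (_ : T.toFun (T.toFun i) ≤ T.toFun (T.toFun j)))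
      simp only [Category.assoc]
      rw [reassoc_of% natφ' i j hle, natψ _ _ (T.mono hle)]
    · show (φ' i ≫ N.map (homOfLE (_ : T.toFun i ≤ j))) ≫ N.map (homOfLE (_ : j ≤ T.toFun (T.toFun j))) = (φ' i ≫ ψ (T.toFun i)) ≫ (φ (T.toFun (T.toFun i)) ≫ N.map (homOfLE (_ : T.toFun (T.toFun (T.toFun i)) ≤ T.toFun (T.toFun j))))
      simp only [Category.assoc]
      rw [reassoc_of% tψφ (T.toFun i)]
      simp only [← Functor.map_comp, homOfLE_comp] <;> rfl
    · show (ψ' i ≫ M.map (homOfLE (_ : T.toFun i ≤ j))) ≫ (φ' j ≫ ψ (T.toFun j)) = N.map (homOfLE (_ : i ≤ T.toFun (T.toFun i))) ≫ (ψ (T.toFun (T.toFun i)) ≫ M.map (homOfLE (_ : T.toFun (T.toFun (T.toFun i)) ≤ T.toFun (T.toFun j))))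
      simp only [Category.assoc]
      rw [reassoc_of% natφ' _ _ hle, reassoc_of% tψφ' i, natψ _ _ (T.mono hle)] <;> rfl
    · show N.map (homOfLE (_ : i ≤ j)) ≫ N.map (homOfLE (_ : j ≤ T.toFun (T.toFun j))) = N.map (homOfLE (_ : i ≤ T.toFun (T.toFun i))) ≫ N.map (homOfLE (_ : T.toFun (T.toFun i) ≤ T.toFun (T.toFun j)))
      simp only [← Functor.map_comp, homOfLE_comp] <;> rfl
  · rintro (i | i)
    · show (φ i ≫ ψ' (T.toFun i)) ≫ (φ' (T.toFun (T.toFun i)) ≫ ψ (T.toFun (T.toFun (T.toFun i)))) = M.map (homOfLE (_ : i ≤ T.toFun (T.toFun (T.toFun (T.toFun i)))))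
      simp only [Category.assoc]
      rw [reassoc_of% tψφ' (T.toFun i), natψ _ _ ((T.le_self _).trans (T.le_self _)),
        reassoc_of% tφψ i]
      simp only [← Functor.map_comp, homOfLE_comp] <;> rfl
    · show N.map (homOfLE (_ : i ≤ T.toFun (T.toFun i))) ≫ N.map (homOfLE (_ : T.toFun (T.toFun i) ≤ T.toFun (T.toFun (T.toFun (T.toFun i))))) = N.map (homOfLE (_ : i ≤ T.toFun (T.toFun (T.toFun (T.toFun i)))))
      simp only [← Functor.map_comp, homOfLE_comp] <;> rfl
  · rintro (i | i)
    · show (φ' i ≫ ψ (T.toFun i)) ≫ (φ (T.toFun (T.toFun i)) ≫ ψ' (T.toFun (T.toFun (T.toFun i)))) = M.map (homOfLE (_ : i ≤ T.toFun (T.toFun (T.toFun (T.toFun i)))))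
      simp only [Category.assoc]
      rw [reassoc_of% tψφ (T.toFun i), natψ' _ _ ((T.le_self _).trans (T.le_self _)),
        reassoc_of% tφψ' i]
      simp only [← Functor.map_comp, homOfLE_comp] <;> rfl
    · show N.map (homOfLE (_ : i ≤ T.toFun (T.toFun i))) ≫ N.map (homOfLE (_ : T.toFun (T.toFun i) ≤ T.toFun (T.toFun (T.toFun (T.toFun i))))) = N.map (homOfLE (_ : i ≤ T.toFun (T.toFun (T.toFun (T.toFun i)))))
      simp only [← Functor.map_comp, homOfLE_comp] <;> rfl
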